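/- Let a ∈ J with Na ∉ ℤ. If j ∈ {0,1,2}, 3Na ∉ ℤ, and the fractional part of Na lies in (j/3, (j+1)/3), then B₀(a) = A₀^j. If j ∈ {0,1,2,3}, 4Na ∉ ℤ, and the fractional part of Na lies in (j/4, (j+1)/4), then B₁(a) = A₁^j. -/

import Mathlib

open Set Filter

noncomputable section

/-- The digit set Ω₀. -/
def Dig0 : Finset (ℤ × ℤ) := {(0,0),(0,1),(0,2),(1,0),(1,2),(2,0),(2,1),(2,2)}

/-- The digit set Ω₁. -/
def Dig1 : Finset (ℤ × ℤ) :=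
  {(0,0),(0,1),(0,2),(0,3),(1,0),(1,3),(2,0),(2,1),(3,0),(3,1),(3,2),(3,3)}

/-- Ω indexed by a boolean (false = Ω₀, true = Ω₁). -/
def DigB : Bool → Finset (ℤ × ℤ)
  | false => Dig0
  | true => Dig1

/-- The contraction ratio denominator: 3 for the 0-system, 4 for the 1-system. -/
def ratioB : Bool → ℝ
  | false => 3
  | true => 4

/-- Maximal digit for the symbolic space: 2 when σ_i = 0, 3 when σ_i = 1. -/
def capB : Bool → ℕ
  | false => 2
  | true => 3

/-- The maps Φ⁰_d (b = false) and Φ¹_d (b = true). -/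
def Phi (b : Bool) (d : ℤ × ℤ) (p : ℝ × ℝ) : ℝ × ℝ :=
  ((p.1 + (d.1 : ℝ)) / ratioB b, (p.2 + (d.2 : ℝ)) / ratioB b)

/-- `cnt σ b k` = number of indices among the first k with σ-value b (i.e. n₀(k), n₁(k)). -/
def cnt (σ : ℕ → Bool) (b : Bool) (k : ℕ) : ℕ :=
  ((Finset.range k).filter (fun i => σ i = b)).card

/-- The scale 3^{n₀(k)}·4^{n₁(k)}. -/
def sc (σ : ℕ → Bool) (k : ℕ) : ℝ := 3 ^ cnt σ false k * 4 ^ cnt σ true k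

/-- The unit square F₀ = [0,1]². -/
def F0set : Set (ℝ × ℝ) := Set.Icc (0:ℝ) 1 ×ˢ Set.Icc (0:ℝ) 1

/-- The sets F_j of the Moran construction (σ j is the paper's σ_{j+1}). -/
def Fiter (σ : ℕ → Bool) : ℕ → Set (ℝ × ℝ)
  | 0 => F0set
  | j + 1 => ⋃ d ∈ DigB (σ j), Phi (σ j) d '' Fiter σ j

/-- The Sierpinski carpet with Moran structure F_σ = ⋂_{j ≥ 1} F_j. -/
def FMoran (σ : ℕ → Bool) : Set (ℝ × ℝ) := ⋂ j : ℕ, Fiter σ (j + 1)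

/-- The line L_a : y = (M/N)x + a. -/
def Lline (M N : ℕ) (a : ℝ) : Set (ℝ × ℝ) := {p | p.2 = (M : ℝ) / (N : ℝ) * p.1 + a}

/-- The interval J = [-M/N, 1]. -/
def Jset (M N : ℕ) : Set ℝ := Set.Icc (-(M : ℝ) / (N : ℝ)) 1

/-- The expanding maps T⁰_d (b = false) and T¹_d (b = true). -/
def Tmap (M N : ℕ) (b : Bool) (d : ℤ × ℤ) (x : ℝ) : ℝ :=
  ratioB b * x + (d.1 : ℝ) * ((M : ℝ) / (N : ℝ)) - (d.2 : ℝ)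

/-- The contracting maps S⁰_d (b = false) and S¹_d (b = true), inverses of T. -/
def Smap (M N : ℕ) (b : Bool) (d : ℤ × ℤ) (x : ℝ) : ℝ :=
  (x - (d.1 : ℝ) * ((M : ℝ) / (N : ℝ)) + (d.2 : ℝ)) / ratioB b

/-- Composition Φ^{σ₁…σ_n}_{d₁…d_n} = Φ^{σ₁}_{d₁} ∘ ⋯ ∘ Φ^{σ_n}_{d_n}. -/
def PhiComp (σ : ℕ → Bool) {n : ℕ} (w : Fin n → ℤ × ℤ) : ℝ × ℝ → ℝ × ℝ :=
  (List.ofFn (fun i : Fin n => Phi (σ i.1) (w i))).foldr (· ∘ ·) id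

/-- Composition S^{σ₁…σ_n}_{d₁…d_n} = S^{σ₁}_{d₁} ∘ ⋯ ∘ S^{σ_n}_{d_n}. -/
def Scomp (M N : ℕ) (σ : ℕ → Bool) {n : ℕ} (w : Fin n → ℤ × ℤ) : ℝ → ℝ :=
  (List.ofFn (fun i : Fin n => Smap M N (σ i.1) (w i))).foldr (· ∘ ·) id

/-- Composition T^{σ₁…σ_n}_{d₁…d_n} = T^{σ_n}_{d_n} ∘ ⋯ ∘ T^{σ₁}_{d₁}. -/
def Tcomp (M N : ℕ) (σ : ℕ → Bool) {n : ℕ} (w : Fin n → ℤ × ℤ) : ℝ → ℝ :=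
  (List.ofFn (fun i : Fin n => Tmap M N (σ i.1) (w i))).foldl (fun g f => f ∘ g) id

/-- N_n^σ(a): the number of admissible words of length n whose level-n square meets L_a. -/
def Ncount (M N : ℕ) (σ : ℕ → Bool) (n : ℕ) (a : ℝ) : ℕ :=
  Set.ncard {w : Fin n → ℤ × ℤ |
    (∀ i, w i ∈ DigB (σ i.1)) ∧ (PhiComp σ w '' F0set ∩ Lline M N a).Nonempty}

/-- Γ_x = {x + i/N : i ∈ ℤ} ∩ J. -/
def GammaSet (M N : ℕ) (x : ℝ) : Set ℝ :=
  {y | (∃ i : ℤ, y = x + (i : ℝ) / (N : ℝ)) ∧ y ∈ Jset M N}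

/-- The matrix A₀^j (1-based indices p, q correspond to the Fin values plus one). -/
def A0mat (M N : ℕ) (j : ℕ) : Matrix (Fin (N + M)) (Fin (N + M)) ℝ :=
  Matrix.of fun p q =>
    ((Dig0.filter (fun d => d.1 * (M : ℤ) - d.2 * (N : ℤ) =
        2 * (M : ℤ) + 2 + ((q : ℕ) + 1 : ℤ) - 3 * ((p : ℕ) + 1 : ℤ) - (j : ℤ))).card : ℝ)

/-- The matrix A₁^j. -/
def A1mat (M N : ℕ) (j : ℕ) : Matrix (Fin (N + M)) (Fin (N + M)) ℝ :=
  Matrix.of fun p q =>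
    ((Dig1.filter (fun d => d.1 * (M : ℤ) - d.2 * (N : ℤ) =
        3 * (M : ℤ) + 3 + ((q : ℕ) + 1 : ℤ) - 4 * ((p : ℕ) + 1 : ℤ) - (j : ℤ))).card : ℝ)

/-- A^j_b : A₀^j when b = false, A₁^j when b = true. -/
def Amat (M N : ℕ) : Bool → ℕ → Matrix (Fin (N + M)) (Fin (N + M)) ℝ
  | false => A0mat M N
  | true => A1mat M N

/-- The ordered matrix product A^{ξ₁}_{σ₁} A^{ξ₂}_{σ₂} ⋯ A^{ξ_k}_{σ_k}. -/
def Aprod (M N : ℕ) (σ : ℕ → Bool) (ξ : ℕ → ℕ) (k : ℕ) :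
    Matrix (Fin (N + M)) (Fin (N + M)) ℝ :=
  ((List.range k).map (fun i => Amat M N (σ i) (ξ i))).prod

/-- The matrix B_b(x), built from a chosen increasing enumeration Γe of the sets Γ_x. -/
def Bmat (M N : ℕ) (Γe : ℝ → Fin (N + M) → ℝ) (b : Bool) (x : ℝ) :
    Matrix (Fin (N + M)) (Fin (N + M)) ℝ :=
  Matrix.of fun p q =>
    (Set.ncard {d : ℤ × ℤ | d ∈ DigB b ∧ Tmap M N b d (Γe x p) = Γe (ratioB b * x) q} : ℝ)

/-- ‖X‖: the sum of all entries of a matrix. -/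
def mnorm {n : ℕ} (X : Matrix (Fin n) (Fin n) ℝ) : ℝ := ∑ p, ∑ q, X p q

/-- The least number of sets of diameter at most δ needed to cover E. -/
def coverNum (E : Set (ℝ × ℝ)) (δ : ℝ) : ℕ :=
  sInf {n : ℕ | ∃ S : Finset (Set (ℝ × ℝ)), S.card = n ∧
    (∀ s ∈ S, EMetric.diam s ≤ ENNReal.ofReal δ) ∧ E ⊆ ⋃ s ∈ S, s}

/-- The upper box dimension. -/
def uboxDim (E : Set (ℝ × ℝ)) : ℝ :=
  limsup (fun δ : ℝ => Real.log (coverNum E δ : ℝ) / (-Real.log δ))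
    (nhdsWithin (0 : ℝ) (Set.Ioi 0))

/-- The lower box dimension. -/
def lboxDim (E : Set (ℝ × ℝ)) : ℝ :=
  liminf (fun δ : ℝ => Real.log (coverNum E δ : ℝ) / (-Real.log δ))
    (nhdsWithin (0 : ℝ) (Set.Ioi 0))

/-- The finite words Σ_σ^k. -/
def wordsF (σ : ℕ → Bool) (k : ℕ) : Finset (Fin k → ℕ) :=
  Fintype.piFinset fun i => Finset.range (capB (σ i.1) + 1)

/-- A_ω for a finite word ω ∈ Σ_σ^k. -/
def AprodW (M N : ℕ) (σ : ℕ → Bool) {k : ℕ} (ω : Fin k → ℕ) :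
    Matrix (Fin (N + M)) (Fin (N + M)) ℝ :=
  (List.ofFn (fun i : Fin k => Amat M N (σ i.1) (ω i))).prod

/-- The pressure function P_A(q). -/
def PA (M N : ℕ) (σ : ℕ → Bool) (q : ℝ) : ℝ :=
  limsup (fun k : ℕ =>
    Real.log (∑ ω ∈ wordsF σ k, mnorm (AprodW M N σ ω) ^ q) / (k : ℝ)) atTop

/-- The level set E(α) of intercepts whose box-dimension limit equals α. -/
def Eset (M N : ℕ) (σ : ℕ → Bool) (α : ℝ) : Set ℝ :=
  {a | a ∈ Jset M N ∧ (∀ k : ℕ, ¬∃ m : ℤ, sc σ k * (N : ℝ) * a = (m : ℝ)) ∧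
    ∃ κ : ℕ, (1 ≤ κ ∧ κ ≤ N + M) ∧ ∃ ξ : ℕ → ℕ, (∀ i, ξ i ≤ capB (σ i)) ∧
      a = (-(M : ℝ) - 1 + (κ : ℝ)) / (N : ℝ) +
          1 / (N : ℝ) * ∑' i : ℕ, (ξ i : ℝ) / sc σ (i + 1) ∧
      Tendsto (fun k : ℕ => Real.log (mnorm (Aprod M N σ ξ k)) /
        ((cnt σ false k : ℝ) * Real.log 3 + (cnt σ true k : ℝ) * Real.log 4))
        atTop (nhds α)}
lemma gamma_formula (M N : ℕ) (hN : 1 ≤ N) (x : ℝ)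
    (hx : ¬∃ m : ℤ, (N : ℝ) * x = (m : ℝ))
    (g : Fin (N + M) → ℝ) (hmono : StrictMono g)
    (hrange : Set.range g = GammaSet M N x) (p : Fin (N + M)) :
    g p = (((p : ℕ) : ℝ) - M + Int.fract ((N:ℝ) * x)) / N := by
  have hN0 : (0:ℝ) < N := by exact_mod_cast hN
  set θ := Int.fract ((N:ℝ) * x) with hθdef
  have hθ0 : 0 < θ := Int.fract_pos.mpr (fun h => hx ⟨⌊(N:ℝ)*x⌋, h⟩)
  have hθ1 : θ < 1 := Int.fract_lt_one _
  set m0 : ℤ := ⌊(N:ℝ)*x⌋ with hm0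
  have hfloor : (N:ℝ) * x = (m0 : ℝ) + θ := by
    rw [hθdef, hm0, Int.floor_add_fract]
  have hx' : x = ((m0 : ℝ) + θ)/N := by
    rw [eq_div_iff hN0.ne', ← hfloor]; ring
  set f : Fin (N+M) → ℝ := fun p => ((((p:ℕ)):ℝ) - M + θ)/N with hf
  have hfm : StrictMono f := by
    intro p q h
    have h' : (((p:ℕ)):ℝ) < ((q:ℕ):ℝ) := by exact_mod_cast h
    rw [hf]
    exact (div_lt_div_iff_of_pos_right hN0).mpr (by linarith)
  have hrf : Set.range f = GammaSet M N x := by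
    ext y
    constructor
    · rintro ⟨p, rfl⟩
      refine ⟨⟨(p:ℕ) - M - m0, ?_⟩, ?_, ?_⟩
      · rw [hf]; rw [hx']; push_cast; field_simp; ring
      · show -(M : ℝ) / (N : ℝ) ≤ f p
        rw [hf]
        apply (div_le_div_iff_of_pos_right hN0).mpr
        have : (0:ℝ) ≤ ((p:ℕ):ℝ) := by positivity
        linarith
      · show f p ≤ 1
        rw [hf, div_le_one hN0]
        have : ((p:ℕ):ℝ) ≤ (N:ℝ) + M - 1 := by
          have := p.isLt
          have : ((p:ℕ):ℝ) + 1 ≤ ((N+M : ℕ):ℝ) := by exact_mod_cast this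
          push_cast at this; linarith
        linarith
    · rintro ⟨⟨i, rfl⟩, hJ1, hJ2⟩
      set k : ℤ := m0 + i with hk
      have hyk : x + (i:ℝ)/N = ((k:ℝ) + θ)/N := by
        rw [hk, hx']; push_cast; field_simp; ring
      have hkl : -(M:ℤ) ≤ k := by
        have h1 : -(M : ℝ) / N ≤ ((k:ℝ) + θ)/N := hyk ▸ hJ1
        have h2 : -(M:ℝ) ≤ (k:ℝ) + θ := (div_le_div_iff_of_pos_right hN0).mp h1
        have : (-(M:ℤ)-1 : ℝ) < (k:ℝ) := by push_cast; linarith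
        have := (by exact_mod_cast this : -(M:ℤ)-1 < k)
        omega
      have hku : k ≤ (N:ℤ) - 1 := by
        have h1 : ((k:ℝ) + θ)/N ≤ 1 := hyk ▸ hJ2
        have h2 : (k:ℝ) + θ ≤ N := (div_le_one hN0).mp h1
        have : (k:ℝ) < (N:ℝ) := by linarith
        have := (by exact_mod_cast this : k < (N:ℤ))
        omega
      refine ⟨⟨(k + M).toNat, ?_⟩, ?_⟩
      · omega
      · rw [hf]; simp only
        rw [hyk]
        congr 1
        have : (((k + M).toNat : ℕ) : ℝ) = (k:ℝ) + M := by
          have : ((k + M).toNat : ℤ) = k + M := by omega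
          exact_mod_cast congrArg (Int.cast : ℤ → ℝ) this
        rw [this]; ring
  have hgf : g = f := (hmono.range_inj hfm).mp (by rw [hrange, hrf])
  rw [hgf]

/-- B₀(a) = A₀^j and B₁(a) = A₁^j according to the fractional part of Na. -/
theorem stmt10 (M N : ℕ) (hN : 1 ≤ N) (hMN : Nat.Coprime M N)
    (a : ℝ) (haJ : a ∈ Jset M N) (hNa : ¬∃ m : ℤ, (N : ℝ) * a = (m : ℝ))
    (Γe : ℝ → Fin (N + M) → ℝ)
    (hmonoa : StrictMono (Γe a)) (hrangea : Set.range (Γe a) = GammaSet M N a) :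
    (∀ j : ℕ, j ≤ 2 → (¬∃ m : ℤ, 3 * (N : ℝ) * a = (m : ℝ)) →
      StrictMono (Γe (3 * a)) → Set.range (Γe (3 * a)) = GammaSet M N (3 * a) →
      Int.fract ((N : ℝ) * a) ∈ Set.Ioo ((j : ℝ) / 3) (((j : ℝ) + 1) / 3) →
      Bmat M N Γe false a = A0mat M N j) ∧
    (∀ j : ℕ, j ≤ 3 → (¬∃ m : ℤ, 4 * (N : ℝ) * a = (m : ℝ)) →
      StrictMono (Γe (4 * a)) → Set.range (Γe (4 * a)) = GammaSet M N (4 * a) →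
      Int.fract ((N : ℝ) * a) ∈ Set.Ioo ((j : ℝ) / 4) (((j : ℝ) + 1) / 4) →
      Bmat M N Γe true a = A1mat M N j) := by
  have hN0 : (0:ℝ) < N := by exact_mod_cast hN
  have hga : ∀ p, Γe a p = (((p:ℕ):ℝ) - M + Int.fract ((N:ℝ)*a))/N :=
    gamma_formula M N hN a hNa _ hmonoa hrangea
  set θ := Int.fract ((N:ℝ)*a) with hθdef
  have hsub : (N:ℝ)*a - θ = (⌊(N:ℝ)*a⌋ : ℝ) := by rw [hθdef]; exact Int.self_sub_fract _
  constructor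
  · intro j hj h3 hmono3 hrange3 hfr
    have h3' : ¬∃ m : ℤ, (N:ℝ) * (3*a) = (m:ℝ) := by
      rintro ⟨m, hm⟩; exact h3 ⟨m, by linarith⟩
    have hfr3 : Int.fract ((N:ℝ) * (3*a)) = 3*θ - j := by
      rw [Int.fract_eq_iff]
      refine ⟨by have := hfr.1; linarith, by have := hfr.2; linarith,
        ⟨3*⌊(N:ℝ)*a⌋ + j, by push_cast; nlinarith [hsub]⟩⟩
    have hg3 : ∀ q : Fin (N+M), Γe (3*a) q = (((q:ℕ):ℝ) - M + (3*θ - j))/N := by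
      intro q
      rw [gamma_formula M N hN (3*a) h3' _ hmono3 hrange3 q, hfr3]
    ext p q
    simp only [Bmat, A0mat, Matrix.of_apply]
    have hiff : ∀ d : ℤ × ℤ,
        (Tmap M N false d (Γe a p) = Γe (ratioB false * a) q) ↔
        (d.1 * (M : ℤ) - d.2 * (N : ℤ) =
          2 * (M : ℤ) + 2 + ((q : ℕ) + 1 : ℤ) - 3 * ((p : ℕ) + 1 : ℤ) - (j : ℤ)) := by
      intro d
      have hrb : ratioB false * a = 3 * a := by norm_num [ratioB]
      rw [hrb, hga p, hg3 q]
      simp only [Tmap, ratioB]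
      constructor
      · intro h
        have h' : ((d.1:ℝ)*M - (d.2:ℝ)*N) =
            2*(M:ℝ)+2+(((q:ℕ):ℝ)+1)-3*(((p:ℕ):ℝ)+1)-(j:ℝ) := by
          field_simp at h
          linarith
        exact_mod_cast h'
      · intro h
        have h' : ((d.1:ℝ)*M - (d.2:ℝ)*N) =
            2*(M:ℝ)+2+(((q:ℕ):ℝ)+1)-3*(((p:ℕ):ℝ)+1)-(j:ℝ) := by
          exact_mod_cast h
        field_simp
        linarith
    have hset : {d : ℤ×ℤ | d ∈ DigB false ∧
        Tmap M N false d (Γe a p) = Γe (ratioB false * a) q}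
        = ↑(Dig0.filter (fun d => d.1 * (M : ℤ) - d.2 * (N : ℤ) =
        2 * (M : ℤ) + 2 + ((q : ℕ) + 1 : ℤ) - 3 * ((p : ℕ) + 1 : ℤ) - (j : ℤ))) := by
      ext d
      constructor
      · rintro ⟨hd, he⟩
        exact Finset.mem_coe.mpr (Finset.mem_filter.mpr ⟨hd, (hiff d).mp he⟩)
      · intro hd
        have h2 := Finset.mem_filter.mp (Finset.mem_coe.mp hd)
        exact ⟨h2.1, (hiff d).mpr h2.2⟩
    rw [hset, Set.ncard_coe_finset]
  · intro j hj h4 hmono4 hrange4 hfr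
    have h4' : ¬∃ m : ℤ, (N:ℝ) * (4*a) = (m:ℝ) := by
      rintro ⟨m, hm⟩; exact h4 ⟨m, by linarith⟩
    have hfr4 : Int.fract ((N:ℝ) * (4*a)) = 4*θ - j := by
      rw [Int.fract_eq_iff]
      refine ⟨by have := hfr.1; linarith, by have := hfr.2; linarith,
        ⟨4*⌊(N:ℝ)*a⌋ + j, by push_cast; nlinarith [hsub]⟩⟩
    have hg4 : ∀ q : Fin (N+M), Γe (4*a) q = (((q:ℕ):ℝ) - M + (4*θ - j))/N := by
      intro q
      rw [gamma_formula M N hN (4*a) h4' _ hmono4 hrange4 q, hfr4]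
    ext p q
    simp only [Bmat, A1mat, Matrix.of_apply]
    have hiff : ∀ d : ℤ × ℤ,
        (Tmap M N true d (Γe a p) = Γe (ratioB true * a) q) ↔
        (d.1 * (M : ℤ) - d.2 * (N : ℤ) =
          3 * (M : ℤ) + 3 + ((q : ℕ) + 1 : ℤ) - 4 * ((p : ℕ) + 1 : ℤ) - (j : ℤ)) := by
      intro d
      have hrb : ratioB true * a = 4 * a := by norm_num [ratioB]
      rw [hrb, hga p, hg4 q]
      simp only [Tmap, ratioB]
      constructor
      · intro h
        have h' : ((d.1:ℝ)*M - (d.2:ℝ)*N) =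
            3*(M:ℝ)+3+(((q:ℕ):ℝ)+1)-4*(((p:ℕ):ℝ)+1)-(j:ℝ) := by
          field_simp at h
          linarith
        exact_mod_cast h'
      · intro h
        have h' : ((d.1:ℝ)*M - (d.2:ℝ)*N) =
            3*(M:ℝ)+3+(((q:ℕ):ℝ)+1)-4*(((p:ℕ):ℝ)+1)-(j:ℝ) := by
          exact_mod_cast h
        field_simp
        linarith
    have hset : {d : ℤ×ℤ | d ∈ DigB true ∧
        Tmap M N true d (Γe a p) = Γe (ratioB true * a) q}
        = ↑(Dig1.filter (fun d => d.1 * (M : ℤ) - d.2 * (N : ℤ) =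
        3 * (M : ℤ) + 3 + ((q : ℕ) + 1 : ℤ) - 4 * ((p : ℕ) + 1 : ℤ) - (j : ℤ))) := by
      ext d
      constructor
      · rintro ⟨hd, he⟩
        exact Finset.mem_coe.mpr (Finset.mem_filter.mpr ⟨hd, (hiff d).mp he⟩)
      · intro hd
        have h2 := Finset.mem_filter.mp (Finset.mem_coe.mp hd)
        exact ⟨h2.1, (hiff d).mpr h2.2⟩
    rw [hset, Set.ncard_coe_finset]
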